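/- Let A be a symmetric positive definite n×n real matrix, C a symmetric positive definite n×n real matrix, B an n×n real matrix, and Λ an n×n real matrix satisfying Λ A⁻¹ Λᵀ = C. Define S = C + B A⁻¹ Bᵀ and Ŝ = (B + Λ) A⁻¹ (B + Λ)ᵀ, and assume Ŝ is invertible. Then every eigenvalue of Ŝ⁻¹ S (over ℂ) is real and is greater than or equal to 1/2. -/

import Mathlib

open Matrix ComplexOrder

private lemma psd_smul_half {n : ℕ} {M : Matrix (Fin n) (Fin n) ℝ} (h : M.PosSemidef) :
    ((1/2 : ℝ) • M).PosSemidef := by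
  refine ⟨?_, fun x => ?_⟩
  · have h1 := h.1
    unfold Matrix.IsHermitian at h1 ⊢
    rw [conjTranspose_smul, h1, star_trivial]
  · exact (h.smul (by norm_num : (0:ℝ) ≤ 1/2)).2 x

open scoped MatrixOrder in
private lemma psd_sqrt_exists {n : ℕ} {M : Matrix (Fin n) (Fin n) ℝ} (h : M.PosSemidef) :
    ∃ T : Matrix (Fin n) (Fin n) ℝ, T.PosSemidef ∧ T * T = M :=
  ⟨CFC.sqrt M, (CFC.sqrt_nonneg M).posSemidef, CFC.sqrt_mul_sqrt_self M h.nonneg⟩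

private lemma herm_map {n : ℕ} {M : Matrix (Fin n) (Fin n) ℝ} (h : M.IsHermitian) :
    (M.map (algebraMap ℝ ℂ)).IsHermitian := by
  unfold Matrix.IsHermitian at h ⊢
  rw [← Matrix.conjTranspose_map _ (fun a => by simp), h]

/-- Matching strategy spectral lower bound: if `Lam A⁻¹ Lamᵀ = C`,
`S = C + B A⁻¹ Bᵀ`, `Shat = (B + Lam) A⁻¹ (B + Lam)ᵀ` and `Shat` is
invertible, then every eigenvalue of `Shat⁻¹ S` (over `ℂ`) is real and is
at least `1/2`. -/
theorem matching_strategy_eigenvalue_lower_bound (n : ℕ)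
    (A C B Lam : Matrix (Fin n) (Fin n) ℝ)
    (hA : A.PosDef) (hC : C.PosDef)
    (hLam : Lam * A⁻¹ * Lamᵀ = C)
    (S Shat : Matrix (Fin n) (Fin n) ℝ)
    (hS : S = C + B * A⁻¹ * Bᵀ)
    (hShat : Shat = (B + Lam) * A⁻¹ * (B + Lam)ᵀ)
    (hShatUnit : IsUnit Shat) :
    ∀ z ∈ spectrum ℂ ((Shat⁻¹ * S).map (algebraMap ℝ ℂ)),
      z.im = 0 ∧ (1 / 2 : ℝ) ≤ z.re := by
  have hct : ∀ (X : Matrix (Fin n) (Fin n) ℝ), Xᴴ = Xᵀ := fun X =>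
    Matrix.conjTranspose_eq_transpose_of_trivial X
  have hdetShat : IsUnit Shat.det := (Matrix.isUnit_iff_isUnit_det _).mp hShatUnit
  -- Shat is positive semidefinite
  have hShatPSD : Shat.PosSemidef := by
    rw [hShat, ← hct]
    exact hA.inv.posSemidef.mul_mul_conjTranspose_same (B + Lam)
  -- the "difference" matrix
  set D := (B - Lam) * A⁻¹ * (B - Lam)ᵀ with hD
  have hDPSD : D.PosSemidef := by
    rw [hD, ← hct]
    exact hA.inv.posSemidef.mul_mul_conjTranspose_same (B - Lam)
  -- key algebraic identity : 2 S = Shat + D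
  have hkey : S + S = Shat + D := by
    rw [hS, hShat, hD, ← hLam]
    simp only [transpose_add, transpose_sub]
    noncomm_ring
  have hhalf : S - (1/2 : ℝ) • Shat = (1/2 : ℝ) • D := by
    have h2 : (1/2 : ℝ) • (S + S) = (1/2 : ℝ) • (Shat + D) := by rw [hkey]
    rw [smul_add, smul_add] at h2
    have hS2 : (1/2 : ℝ) • S + (1/2 : ℝ) • S = S := by
      rw [← add_smul]; norm_num
    rw [hS2] at h2
    rw [h2, add_sub_cancel_left]
  -- the square root of Shat
  obtain ⟨T, hTpsd, hTsq'⟩ := psd_sqrt_exists hShatPSD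
  have hTsq : T * T = Shat := hTsq'
  have hTH : T.IsHermitian := hTpsd.1
  have hTunit : IsUnit T := by
    rw [Matrix.isUnit_iff_isUnit_det]
    have hd : T.det * T.det = Shat.det := by rw [← det_mul, hTsq]
    exact isUnit_of_mul_isUnit_left (hd ▸ hdetShat)
  have hdT : IsUnit T.det := (Matrix.isUnit_iff_isUnit_det _).mp hTunit
  have hTiT : T⁻¹ * T = 1 := Matrix.nonsing_inv_mul T hdT
  have hTTi : T * T⁻¹ = 1 := Matrix.mul_nonsing_inv T hdT
  have hTiH : T⁻¹.IsHermitian := hTH.inv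
  -- the symmetrized matrix
  set M0 := T⁻¹ * S * T⁻¹ with hM0
  have hSH : S.IsHermitian := by
    rw [hS]
    refine hC.isHermitian.add ?_
    have := (hA.inv.posSemidef.mul_mul_conjTranspose_same B).1
    rwa [hct] at this
  have hM0H : M0.IsHermitian := by
    unfold Matrix.IsHermitian
    rw [hM0, conjTranspose_mul, conjTranspose_mul, hTiH.eq, hSH.eq, mul_assoc]
  -- M0 - 1/2 is positive semidefinite
  have h1 : T⁻¹ * Shat * T⁻¹ = 1 := by
    rw [← hTsq, ← mul_assoc, hTiT, one_mul, hTTi]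
  have hN : M0 - (1/2 : ℝ) • 1 = T⁻¹ * ((1/2 : ℝ) • D) * T⁻¹ := by
    rw [← hhalf, Matrix.mul_sub, Matrix.sub_mul, Matrix.mul_smul, Matrix.smul_mul, h1, hM0]
  have hNPSD : (M0 - (1/2 : ℝ) • 1).PosSemidef := by
    have hpsd := (psd_smul_half hDPSD).mul_mul_conjTranspose_same T⁻¹
    rw [hTiH.eq] at hpsd
    rw [hN]; exact hpsd
  -- similarity
  have hsim : Shat⁻¹ * S = T⁻¹ * M0 * T := by
    rw [hM0, ← hTsq, Matrix.mul_inv_rev]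
    simp [Matrix.mul_assoc, hTiT]
  -- move to ℂ
  set f := algebraMap ℝ ℂ with hf
  have hTcUnit : IsUnit (T.map f) := by
    have := hTunit.map (RingHom.mapMatrix f : Matrix (Fin n) (Fin n) ℝ →+* Matrix (Fin n) (Fin n) ℂ)
    rwa [RingHom.mapMatrix_apply] at this
  have huinv : (↑hTcUnit.unit⁻¹ : Matrix (Fin n) (Fin n) ℂ) = T⁻¹.map f := by
    rw [Matrix.coe_units_inv, hTcUnit.unit_spec]
    apply Matrix.inv_eq_right_inv
    rw [← Matrix.map_mul, hTTi, Matrix.map_one f (map_zero f) (map_one f)]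
  have hspec : spectrum ℂ ((Shat⁻¹ * S).map f) = spectrum ℂ (M0.map f) := by
    have hconj : spectrum ℂ ((↑hTcUnit.unit⁻¹ : Matrix (Fin n) (Fin n) ℂ) * M0.map f *
        (↑hTcUnit.unit : Matrix (Fin n) (Fin n) ℂ)) = spectrum ℂ (M0.map f) :=
      spectrum.units_conjugate'
    rw [huinv, hTcUnit.unit_spec] at hconj
    rw [hsim, Matrix.map_mul, Matrix.map_mul]
    exact hconj
  intro z hz
  rw [hspec] at hz
  have hH : (M0.map f).IsHermitian := herm_map hM0H
  -- identify z with an eigenvalue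
  rw [hH.spectral_theorem, Unitary.conjStarAlgAut_apply, Unitary.spectrum_star_right_conjugate,
    spectrum_diagonal] at hz
  obtain ⟨i, hi⟩ := hz
  -- eigenvalue lower bound
  have hmem : hH.eigenvalues i ∈ spectrum ℝ (M0.map f) := hH.eigenvalues_mem_spectrum_real i
  set Kc := (M0 - (1/2 : ℝ) • 1).map f with hKc
  have hKcEq : Kc = M0.map f - algebraMap ℝ (Matrix (Fin n) (Fin n) ℂ) (1/2) := by
    rw [hKc, Matrix.map_sub f (by intro a b; simp [hf]), Algebra.algebraMap_eq_smul_one]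
    congr 1
    ext i j
    by_cases h : i = j <;> simp [h, Matrix.one_apply, hf]
  have hmem2 : hH.eigenvalues i - 1/2 ∈ spectrum ℝ Kc := by
    rw [spectrum.mem_iff] at hmem ⊢
    rw [hKcEq, map_sub, sub_sub_sub_cancel_right]
    exact hmem
  have hKcPSD : Kc.PosSemidef := by
    obtain ⟨R, hRpsd, hRsq⟩ := psd_sqrt_exists hNPSD
    have hfact : Kc = (R.map f)ᴴ * (R.map f) := by
      rw [(herm_map hRpsd.1).eq, ← Matrix.map_mul, hRsq]
    rw [hfact]
    exact posSemidef_conjTranspose_mul_self _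
  rw [hKcPSD.isHermitian.spectrum_real_eq_range_eigenvalues] at hmem2
  obtain ⟨j, hj⟩ := hmem2
  have hnn := hKcPSD.eigenvalues_nonneg j
  rw [hj] at hnn
  have hge : (1/2 : ℝ) ≤ hH.eigenvalues i := by linarith
  constructor
  · rw [← hi]; simp
  · rw [← hi]; simpa using hge
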